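/- Let A be the strictly upper triangular matrix of a directed line graph on p nodes with edge weights a₁,…,a_{p−1} ∈ [−1,1], and let Σ = ((I−A)(I−A)ᵀ)⁻¹. Then for all i < j, Σ_{ij} = 0 if and only if a_k = 0 for some k with i ≤ k ≤ j−1. -/

import Mathlib

open Matrix Finset

/-- For the directed line graph with edge weights in [−1,1], the covariance
Σ_{ij} (i < j) vanishes iff some edge weight on the path from i to j is zero. -/
theorem line_graph_covariance_zero_iff (p : ℕ) (a : ℕ → ℝ)
    (ha : ∀ k, a k ∈ Set.Icc (-1 : ℝ) 1)
    (A : Matrix (Fin p) (Fin p) ℝ)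
    (hA : ∀ i j : Fin p, A i j = if (j : ℕ) = (i : ℕ) + 1 then a i else 0)
    (Sgm : Matrix (Fin p) (Fin p) ℝ)
    (hSgm : Sgm = ((1 - A) * (1 - A)ᵀ)⁻¹) :
    ∀ i j : Fin p, (i : ℕ) < (j : ℕ) →
      (Sgm i j = 0 ↔ ∃ k, (i : ℕ) ≤ k ∧ k < (j : ℕ) ∧ a k = 0) := by
  set C : Matrix (Fin p) (Fin p) ℝ :=
    fun i j => if (i:ℕ) ≤ (j:ℕ) then ∏ k ∈ Finset.Ico (i:ℕ) (j:ℕ), a k else 0 with hC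
  have hBC : (1 - A) * C = 1 := by
    ext i j
    simp only [Matrix.mul_apply, Matrix.sub_apply, Matrix.one_apply, sub_mul]
    rw [Finset.sum_sub_distrib]
    have h1 : ∑ k : Fin p, (if i = k then (1:ℝ) else 0) * C k j = C i j := by
      simp
    have h2 : ∑ k : Fin p, A i k * C k j
        = if h : (i:ℕ)+1 < p then a i * C ⟨(i:ℕ)+1, h⟩ j else 0 := by
      split
      · next h =>
        rw [Finset.sum_eq_single (⟨(i:ℕ)+1, h⟩ : Fin p)]
        · rw [hA]; simp
        · intro b _ hb
          rw [hA]
          have : (b:ℕ) ≠ (i:ℕ)+1 := by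
            intro hh; apply hb; apply Fin.ext; simp [hh]
          simp [this]
        · simp
      · next h =>
        apply Finset.sum_eq_zero
        intro b _
        rw [hA]
        have : (b:ℕ) ≠ (i:ℕ)+1 := by
          intro hh; apply h; rw [← hh]; exact b.isLt
        simp [this]
    rw [h1, h2]
    rcases lt_trichotomy (i:ℕ) (j:ℕ) with hij | hij | hij
    · -- i < j : C i j = a i * C (i+1) j, result 0
      have hp : (i:ℕ)+1 < p := lt_of_le_of_lt hij j.isLt
      rw [dif_pos hp]
      have hCij : C i j = ∏ k ∈ Finset.Ico (i:ℕ) (j:ℕ), a k := by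
        simp only [hC]; rw [if_pos (le_of_lt hij)]
      have hCij' : C ⟨(i:ℕ)+1, hp⟩ j = ∏ k ∈ Finset.Ico ((i:ℕ)+1) (j:ℕ), a k := by
        simp only [hC, Fin.val_mk]; rw [if_pos (Nat.succ_le_of_lt hij)]
      rw [hCij, hCij', Finset.prod_eq_prod_Ico_succ_bot hij]
      have hne : i ≠ j := by intro h; subst h; exact lt_irrefl _ hij
      rw [if_neg hne]; ring
    · have : i = j := Fin.ext hij
      subst this
      have hCii : C i i = 1 := by simp only [hC]; rw [if_pos le_rfl]; simp
      rw [hCii]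
      split
      · next h =>
        have h0 : C ⟨(i:ℕ)+1, h⟩ i = 0 := by
          simp only [hC, Fin.val_mk]; rw [if_neg (by omega)]
        rw [h0]; simp
      · simp
    · -- j < i
      have hCij : C i j = 0 := by simp only [hC]; rw [if_neg (by omega)]
      rw [hCij]
      have hne : i ≠ j := by intro h; subst h; exact lt_irrefl _ hij
      rw [if_neg hne]
      split
      · next h =>
        have h0 : C ⟨(i:ℕ)+1, h⟩ j = 0 := by
          simp only [hC, Fin.val_mk]; rw [if_neg (by omega)]
        rw [h0]; ring
      · ring
  have hCB : C * (1 - A) = 1 := (mul_eq_one_comm).mp hBC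
  have hSgmC : Sgm = Cᵀ * C := by
    rw [hSgm]
    apply Matrix.inv_eq_left_inv
    calc Cᵀ * C * ((1 - A) * (1 - A)ᵀ)
        = Cᵀ * (C * (1 - A)) * (1 - A)ᵀ := by simp only [Matrix.mul_assoc]
      _ = Cᵀ * (1 - A)ᵀ := by rw [hCB, Matrix.mul_one]
      _ = ((1 - A) * C)ᵀ := by rw [Matrix.transpose_mul]
      _ = 1 := by rw [hBC, Matrix.transpose_one]
  intro i j hij
  have hentry : Sgm i j = ∑ k : Fin p, C k i * C k j := by
    rw [hSgmC]
    simp [Matrix.mul_apply, Matrix.transpose_apply]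
  set P : ℝ := ∏ l ∈ Finset.Ico (i:ℕ) (j:ℕ), a l with hP
  have hterm : ∀ k : Fin p, C k i * C k j
      = P * (if (k:ℕ) ≤ (i:ℕ) then (∏ l ∈ Finset.Ico (k:ℕ) (i:ℕ), a l)^2 else 0) := by
    intro k
    by_cases hk : (k:ℕ) ≤ (i:ℕ)
    · have hkj : (k:ℕ) ≤ (j:ℕ) := le_trans hk (le_of_lt hij)
      have hCki : C k i = ∏ l ∈ Finset.Ico (k:ℕ) (i:ℕ), a l := by
        simp only [hC]; rw [if_pos hk]
      have hCkj : C k j = ∏ l ∈ Finset.Ico (k:ℕ) (j:ℕ), a l := by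
        simp only [hC]; rw [if_pos hkj]
      rw [hCki, hCkj, if_pos hk,
        ← Finset.prod_Ico_consecutive a hk (le_of_lt hij)]
      ring
    · have hCki : C k i = 0 := by simp only [hC]; rw [if_neg hk]
      rw [hCki, if_neg hk]
      ring
  rw [hentry]
  have hsum : ∑ k : Fin p, C k i * C k j
      = P * ∑ k : Fin p, (if (k:ℕ) ≤ (i:ℕ) then (∏ l ∈ Finset.Ico (k:ℕ) (i:ℕ), a l)^2 else 0) := by
    rw [Finset.mul_sum]
    exact Finset.sum_congr rfl fun k _ => hterm k
  rw [hsum]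
  have hSpos : 0 < ∑ k : Fin p, (if (k:ℕ) ≤ (i:ℕ) then (∏ l ∈ Finset.Ico (k:ℕ) (i:ℕ), a l)^2 else 0) := by
    apply Finset.sum_pos'
    · intro k _
      split
      · positivity
      · exact le_refl 0
    · refine ⟨i, Finset.mem_univ i, ?_⟩
      simp
  constructor
  · intro h
    rcases mul_eq_zero.mp h with h | h
    · rcases Finset.prod_eq_zero_iff.mp h with ⟨l, hl, hl0⟩
      rw [Finset.mem_Ico] at hl
      exact ⟨l, hl.1, hl.2, hl0⟩
    · exact absurd h (ne_of_gt hSpos)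
  · rintro ⟨k, hk1, hk2, hk0⟩
    have : P = 0 := Finset.prod_eq_zero (Finset.mem_Ico.mpr ⟨hk1, hk2⟩) hk0
    rw [this, zero_mul]
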